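/- In the GEW₂ model (gamma priors on all parameters), the full conditional posterior density of θ₄ is log-concave on (0, ∞), provided the gamma shape hyperparameter c₁₆ satisfies c₁₆ ≥ 1. Precisely: for any fixed θ₁, θ₂, θ₃ > 0, β > 0, c₁₆ ≥ 1 and c₁₇ > 0, the function ℓ : (0,∞) → ℝ given by ℓ(t) = (c₁₆ − 1)·ln t − c₁₇·t − t·(Σ_{i=1}^k r_iV_i/T_i) − Σ_{i=1}^k (n_i − r_i) T_i exp(−θ₁ − θ₂/T_i − θ₃V_i − tV_i/T_i) τ_i^β − Σ_{i=1}^k Σ_{j=1}^{r_i} T_i exp(−θ₁ − θ₂/T_i − θ₃V_i − tV_i/T_i) x_{ij}^β is concave on (0, ∞). -/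

import Mathlib

open Real Finset

private lemma concaveOn_lin (m : ℝ) : ConcaveOn ℝ (Set.Ioi (0:ℝ)) (fun t : ℝ => m * t) := by
  refine ⟨convex_Ioi 0, ?_⟩
  intro p _ q _ a b _ _ _
  simp only [smul_eq_mul]
  exact le_of_eq (by ring)

private lemma convexOn_exp_affine (a b : ℝ) :
    ConvexOn ℝ (Set.Ioi (0:ℝ)) (fun t : ℝ => Real.exp (a * t + b)) := by
  have h := convexOn_exp.comp_affineMap (AffineMap.lineMap b (b + a) : ℝ →ᵃ[ℝ] ℝ)
  have he : (fun t : ℝ => Real.exp (a * t + b)) =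
      (Real.exp ∘ (AffineMap.lineMap b (b + a) : ℝ →ᵃ[ℝ] ℝ)) := by
    funext t
    simp [AffineMap.lineMap_apply, smul_eq_mul]
    ring_nf
  rw [he]
  exact (h.subset (Set.subset_univ _) (convex_Ioi 0))

private lemma convexOn_finset_sum {ι : Type*} (s : Finset ι) (f : ι → ℝ → ℝ)
    (h : ∀ i ∈ s, ConvexOn ℝ (Set.Ioi (0:ℝ)) (f i)) :
    ConvexOn ℝ (Set.Ioi (0:ℝ)) (fun t => ∑ i ∈ s, f i t) := by
  classical
  induction s using Finset.cons_induction with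
  | empty => simpa using convexOn_const 0 (convex_Ioi (0:ℝ))
  | cons i s hi ih =>
      simp only [Finset.sum_cons]
      exact (h i (Finset.mem_cons_self i s)).add
        (ih fun j hj => h j (Finset.mem_cons_of_mem hj))

theorem gew2_theta4_logconcave
    (k : ℕ) (T V τ : Fin k → ℝ) (n r : Fin k → ℕ)
    (x : (i : Fin k) → Fin (r i) → ℝ)
    (hT : ∀ i, 0 < T i) (hrn : ∀ i, r i ≤ n i)
    (hτ : ∀ i, 0 < τ i) (hx : ∀ i j, 0 < x i j)
    (θ₁ θ₂ θ₃ β : ℝ) (hθ : 0 < θ₁ ∧ 0 < θ₂ ∧ 0 < θ₃) (hβ : 0 < β)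
    (c₁₆ c₁₇ : ℝ) (hcs : 1 ≤ c₁₆) (hcr : 0 < c₁₇) :
    ConcaveOn ℝ (Set.Ioi (0 : ℝ)) (fun t : ℝ =>
      (c₁₆ - 1) * Real.log t - c₁₇ * t
      - t * (∑ i, (r i : ℝ) * V i / T i)
      - ∑ i, ((n i : ℝ) - r i) * T i * Real.exp (-θ₁ - θ₂ / T i - θ₃ * V i - t * V i / T i) * τ i ^ β
      - ∑ i, ∑ j, T i * Real.exp (-θ₁ - θ₂ / T i - θ₃ * V i - t * V i / T i) * x i j ^ β) := by
  -- log term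
  have hlog : ConcaveOn ℝ (Set.Ioi (0:ℝ)) (fun t : ℝ => (c₁₆ - 1) * Real.log t) := by
    have h := (strictConcaveOn_log_Ioi.concaveOn).smul (sub_nonneg.2 hcs)
    simpa [smul_eq_mul] using h
  -- linear terms
  have hlin : ConcaveOn ℝ (Set.Ioi (0:ℝ))
      (fun t : ℝ => (-c₁₇ - ∑ i, (r i : ℝ) * V i / T i) * t) :=
    concaveOn_lin _
  -- exponent rewriting: -θ₁ - θ₂/T i - θ₃*V i - t*V i/T i = a i * t + b i
  set a : Fin k → ℝ := fun i => -(V i / T i) with ha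
  set b : Fin k → ℝ := fun i => -θ₁ - θ₂ / T i - θ₃ * V i with hb
  have hexp : ∀ i (t : ℝ), -θ₁ - θ₂ / T i - θ₃ * V i - t * V i / T i = a i * t + b i := by
    intro i t; simp only [ha, hb]; ring
  -- first sum convex
  have hs1 : ConvexOn ℝ (Set.Ioi (0:ℝ)) (fun t : ℝ =>
      ∑ i, ((n i : ℝ) - r i) * T i * Real.exp (-θ₁ - θ₂ / T i - θ₃ * V i - t * V i / T i) * τ i ^ β) := by
    refine convexOn_finset_sum _ _ fun i _ => ?_
    have hc : 0 ≤ ((n i : ℝ) - r i) * T i * τ i ^ β := by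
      have h1 : (0:ℝ) ≤ (n i : ℝ) - r i := by
        have := hrn i; exact sub_nonneg.2 (by exact_mod_cast this)
      have h2 := (hT i).le
      have h3 := (hτ i)
      positivity
    have h := (convexOn_exp_affine (a i) (b i)).smul hc
    have he : (fun t : ℝ => ((n i : ℝ) - r i) * T i * Real.exp (-θ₁ - θ₂ / T i - θ₃ * V i - t * V i / T i) * τ i ^ β)
        = fun t : ℝ => (((n i : ℝ) - r i) * T i * τ i ^ β) • Real.exp (a i * t + b i) := by
      funext t; rw [hexp i t]; simp [smul_eq_mul]; ring
    rw [he]; exact h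
  -- second sum convex
  have hs2 : ConvexOn ℝ (Set.Ioi (0:ℝ)) (fun t : ℝ =>
      ∑ i, ∑ j, T i * Real.exp (-θ₁ - θ₂ / T i - θ₃ * V i - t * V i / T i) * x i j ^ β) := by
    refine convexOn_finset_sum _ _ fun i _ => ?_
    refine convexOn_finset_sum _ _ fun j _ => ?_
    have hc : 0 ≤ T i * x i j ^ β := by
      have h2 := (hT i).le
      have h3 := hx i j
      positivity
    have h := (convexOn_exp_affine (a i) (b i)).smul hc
    have he : (fun t : ℝ => T i * Real.exp (-θ₁ - θ₂ / T i - θ₃ * V i - t * V i / T i) * x i j ^ β)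
        = fun t : ℝ => (T i * x i j ^ β) • Real.exp (a i * t + b i) := by
      funext t; rw [hexp i t]; simp [smul_eq_mul]; ring
    rw [he]; exact h
  have hmain := ((hlog.add hlin).sub hs1).sub hs2
  convert hmain using 1
  any_goals rfl
  funext t
  simp only [Pi.add_apply, Pi.sub_apply]
  ring
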